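/- Let F be a finite metric space with at least two points. Then min{ν_F(a) : a ∈ F} = δ(F) and max{ν_F(a) : a ∈ F} = ∇(F). -/
import Mathlib


open Metric

namespace FinDim

variable {X : Type*} [MetricSpace X]

/-- `ν_F(a)`: the distance from `a` to a nearest other point of `F`. -/
noncomputable def nu (F : Finset X) (a : X) : ℝ :=
  sInf {r : ℝ | ∃ x ∈ F, x ≠ a ∧ r = dist a x}

/-- `δ(F)`: the separation of `F`, the minimum distance between distinct points. -/
noncomputable def sep (F : Finset X) : ℝ :=
  sInf {r : ℝ | ∃ x ∈ F, ∃ y ∈ F, x ≠ y ∧ r = dist x y}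

/-- A 2-covering of `F`: a family of subsets of `F` covering `F`,
each member having at least two elements. -/
def IsTwoCover (F : Finset X) (U : Finset (Finset X)) : Prop :=
  (∀ V ∈ U, V ⊆ F) ∧ (∀ V ∈ U, 2 ≤ V.card) ∧ ∀ a ∈ F, ∃ V ∈ U, a ∈ V

/-- `Δ(𝒰)`: maximum diameter of the members of the family `𝒰`. -/
noncomputable def coverDiam (U : Finset (Finset X)) : ℝ :=
  sSup {r : ℝ | ∃ V ∈ U, r = Metric.diam (V : Set X)}

/-- `∇(F)`: the covering diameter of `F`. -/
noncomputable def nablaF (F : Finset X) : ℝ :=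
  sInf {r : ℝ | ∃ U : Finset (Finset X), IsTwoCover F U ∧ r = coverDiam U}

/-- `a` is a focal point of `F`. -/
def IsFocal (F : Finset X) (a : X) : Prop :=
  a ∈ F ∧ ∀ x ∈ F, x ≠ a → dist a x = Metric.diam (F : Set X)

/-- `H^s_𝒰(F) = Σ_{U ∈ 𝒰} Δ(U)^s`. -/
noncomputable def Hcov (U : Finset (Finset X)) (s : ℝ) : ℝ :=
  ∑ V ∈ U, Metric.diam (V : Set X) ^ s

/-- `H^s(F)`: minimum of `H^s_𝒰(F)` over 2-coverings `𝒰` with `Δ(𝒰) = ∇(F)`. -/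
noncomputable def HH (F : Finset X) (s : ℝ) : ℝ :=
  sInf {h : ℝ | ∃ U : Finset (Finset X),
    IsTwoCover F U ∧ coverDiam U = nablaF F ∧ h = Hcov U s}

/-- The finite Hausdorff dimension: the unique `s₀ ∈ (0,∞)` with
`H^{s₀}(F) = Δ(F)^{s₀}` (when `F` has no focal points). -/
noncomputable def dimfH (F : Finset X) : ℝ :=
  sInf {s : ℝ | 0 < s ∧ HH F s = Metric.diam (F : Set X) ^ s}

/-- `T_{∇(F)}(F)`: the minimal cardinality of a 2-covering `𝒰` with `Δ(𝒰) = ∇(F)`. -/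
noncomputable def Tmin (F : Finset X) : ℕ :=
  sInf {n : ℕ | ∃ U : Finset (Finset X),
    IsTwoCover F U ∧ coverDiam U = nablaF F ∧ U.card = n}

/-- The finite box dimension `dim_fB(F) = ln T_{∇(F)}(F) / ln (Δ(F)/∇(F))`. -/
noncomputable def dimfB (F : Finset X) : ℝ :=
  Real.log (Tmin F) / Real.log (Metric.diam (F : Set X) / nablaF F)

/-- `ν_A(x)` for a subset `A` of a metric space. -/
noncomputable def nuSet {Z : Type*} [MetricSpace Z] (A : Set Z) (x : Z) : ℝ :=
  sInf {r : ℝ | ∃ y ∈ A, y ≠ x ∧ r = dist x y}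

/-- `∇(A) = sup {ν_A(x) : x ∈ A}` for a subset `A` of a metric space. -/
noncomputable def nablaSet {Z : Type*} [MetricSpace Z] (A : Set Z) : ℝ :=
  sSup {r : ℝ | ∃ x ∈ A, r = nuSet A x}

end FinDim

section Aux

open FinDim

variable {X : Type*} [MetricSpace X]

private lemma nuSpec (F : Finset X) (a : X) (h : ∃ x ∈ F, x ≠ a) :
    (∃ x ∈ F, x ≠ a ∧ nu F a = dist a x) ∧ ∀ x ∈ F, x ≠ a → nu F a ≤ dist a x := by
  set S := {r : ℝ | ∃ x ∈ F, x ≠ a ∧ r = dist a x} with hS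
  have hfin : S.Finite := by
    apply Set.Finite.subset (F.finite_toSet.image (dist a))
    rintro r ⟨x, hx, hxa, rfl⟩
    exact ⟨x, hx, rfl⟩
  obtain ⟨x, hx, hxa⟩ := h
  have hne : S.Nonempty := ⟨dist a x, x, hx, hxa, rfl⟩
  refine ⟨hne.csInf_mem hfin, fun y hy hya => csInf_le hfin.bddBelow ⟨y, hy, hya, rfl⟩⟩

private lemma sepSpec (F : Finset X) (hF : 2 ≤ F.card) :
    (∃ x ∈ F, ∃ y ∈ F, x ≠ y ∧ sep F = dist x y) ∧
    ∀ x ∈ F, ∀ y ∈ F, x ≠ y → sep F ≤ dist x y := by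
  set S := {r : ℝ | ∃ x ∈ F, ∃ y ∈ F, x ≠ y ∧ r = dist x y} with hS
  have hfin : S.Finite := by
    apply Set.Finite.subset ((F.finite_toSet.prod F.finite_toSet).image
      (fun p : X × X => dist p.1 p.2))
    rintro r ⟨x, hx, y, hy, hxy, rfl⟩
    exact ⟨(x, y), ⟨hx, hy⟩, rfl⟩
  obtain ⟨a, ha, b, hb, hab⟩ := Finset.one_lt_card.1 hF
  have hne : S.Nonempty := ⟨dist a b, a, ha, b, hb, hab, rfl⟩
  refine ⟨hne.csInf_mem hfin, fun x hx y hy hxy =>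
    csInf_le hfin.bddBelow ⟨x, hx, y, hy, hxy, rfl⟩⟩

end Aux

open FinDim in
/-- min{ν_F(a) : a ∈ F} = δ(F) and max{ν_F(a) : a ∈ F} = ∇(F). -/
theorem stmt0 {X : Type*} [MetricSpace X] (F : Finset X) (hF : 2 ≤ F.card) :
    IsLeast {r : ℝ | ∃ a ∈ F, r = nu F a} (sep F) ∧
    IsGreatest {r : ℝ | ∃ a ∈ F, r = nu F a} (nablaF F) := by
  classical
  have hex : ∀ a ∈ F, ∃ x ∈ F, x ≠ a := fun a _ =>
    Finset.exists_mem_ne hF a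
  set N := {r : ℝ | ∃ a ∈ F, r = nu F a} with hN
  have hNfin : N.Finite := by
    apply Set.Finite.subset (F.finite_toSet.image (nu F))
    rintro r ⟨a, ha, rfl⟩
    exact ⟨a, ha, rfl⟩
  obtain ⟨a₁, ha₁, b₁, hb₁, hab₁⟩ := Finset.one_lt_card.1 hF
  have hNne : N.Nonempty := ⟨nu F a₁, a₁, ha₁, rfl⟩
  constructor
  · -- IsLeast
    obtain ⟨⟨x, hx, y, hy, hxy, hsep⟩, hlb⟩ := sepSpec F hF
    constructor
    · refine ⟨y, hy, ?_⟩
      have h1 : nu F y ≤ dist y x :=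
        (nuSpec F y (hex y hy)).2 x hx hxy
      obtain ⟨z, hz, hzy, hnz⟩ := (nuSpec F y (hex y hy)).1
      have h2 : sep F ≤ dist y z := hlb y hy z hz (Ne.symm hzy)
      rw [hsep, dist_comm x y] at *
      linarith [hnz ▸ h2]
    · rintro r ⟨a, ha, rfl⟩
      obtain ⟨z, hz, hza, hnz⟩ := (nuSpec F a (hex a ha)).1
      rw [hnz]
      exact hlb a ha z hz (Ne.symm hza)
  · -- IsGreatest
    set m := sSup N with hm
    have hmem : m ∈ N := hNne.csSup_mem hNfin
    have hub : ∀ r ∈ N, r ≤ m := fun r hr => le_csSup hNfin.bddAbove hr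
    -- the cover achieving m
    set U₀ : Finset (Finset X) :=
      ((F ×ˢ F).filter (fun p => p.2 ≠ p.1 ∧ nu F p.1 = dist p.1 p.2)).image
        (fun p => {p.1, p.2}) with hU₀
    have hmemU₀ : ∀ V ∈ U₀, ∃ a ∈ F, ∃ b ∈ F, b ≠ a ∧ nu F a = dist a b ∧
        V = {a, b} := by
      intro V hV
      simp only [hU₀, Finset.mem_image, Finset.mem_filter, Finset.mem_product] at hV
      obtain ⟨⟨a, b⟩, ⟨⟨ha, hb⟩, hba, hd⟩, rfl⟩ := hV
      exact ⟨a, ha, b, hb, hba, hd, rfl⟩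
    have hgetU₀ : ∀ a ∈ F, ∃ x ∈ F, x ≠ a ∧ nu F a = dist a x ∧
        ({a, x} : Finset X) ∈ U₀ := by
      intro a ha
      obtain ⟨x, hx, hxa, hd⟩ := (nuSpec F a (hex a ha)).1
      refine ⟨x, hx, hxa, hd, ?_⟩
      simp only [hU₀, Finset.mem_image, Finset.mem_filter, Finset.mem_product]
      exact ⟨(a, x), ⟨⟨ha, hx⟩, hxa, hd⟩, rfl⟩
    have hcover : IsTwoCover F U₀ := by
      refine ⟨?_, ?_, ?_⟩
      · intro V hV
        obtain ⟨a, ha, b, hb, _, _, rfl⟩ := hmemU₀ V hV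
        intro z hz
        simp only [Finset.mem_insert, Finset.mem_singleton] at hz
        rcases hz with rfl | rfl <;> assumption
      · intro V hV
        obtain ⟨a, ha, b, hb, hba, _, rfl⟩ := hmemU₀ V hV
        rw [Finset.card_insert_of_notMem (by simpa using Ne.symm hba),
          Finset.card_singleton]
      · intro a ha
        obtain ⟨x, hx, hxa, hd, hmem'⟩ := hgetU₀ a ha
        exact ⟨{a, x}, hmem', Finset.mem_insert_self a _⟩
    have hdiam_pair : ∀ a b : X, Metric.diam (({a, b} : Finset X) : Set X) = dist a b := by
      intro a b
      rw [Finset.coe_insert, Finset.coe_singleton, Metric.diam_pair]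
    have hCeq : {r : ℝ | ∃ V ∈ U₀, r = Metric.diam (V : Set X)} = N := by
      ext r
      constructor
      · rintro ⟨V, hV, rfl⟩
        obtain ⟨a, ha, b, hb, hba, hd, rfl⟩ := hmemU₀ V hV
        exact ⟨a, ha, by rw [hdiam_pair, hd]⟩
      · rintro ⟨a, ha, rfl⟩
        obtain ⟨x, hx, hxa, hd, hmem'⟩ := hgetU₀ a ha
        exact ⟨{a, x}, hmem', by rw [hdiam_pair, hd]⟩
    have hcd₀ : coverDiam U₀ = m := by
      rw [coverDiam, hCeq]
    -- every 2-cover has coverDiam ≥ m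
    have hlbD : ∀ U : Finset (Finset X), IsTwoCover F U → m ≤ coverDiam U := by
      intro U hU
      obtain ⟨a, ha, hma⟩ := hmem
      obtain ⟨V, hV, haV⟩ := hU.2.2 a ha
      obtain ⟨x, hxV, hxa⟩ := Finset.exists_mem_ne (hU.2.1 V hV) a
      have hxF : x ∈ F := hU.1 V hV hxV
      have h1 : nu F a ≤ dist a x := (nuSpec F a (hex a ha)).2 x hxF hxa
      have h2 : dist a x ≤ Metric.diam (V : Set X) :=
        Metric.dist_le_diam_of_mem (V.finite_toSet.isBounded) haV hxV
      have hCfin : {r : ℝ | ∃ W ∈ U, r = Metric.diam (W : Set X)}.Finite := by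
        apply Set.Finite.subset (U.finite_toSet.image (fun W : Finset X => Metric.diam (W : Set X)))
        rintro r ⟨W, hW, rfl⟩
        exact ⟨W, hW, rfl⟩
      have h3 : Metric.diam (V : Set X) ≤ coverDiam U :=
        le_csSup hCfin.bddAbove ⟨V, hV, rfl⟩
      calc m = nu F a := hma
        _ ≤ dist a x := h1
        _ ≤ _ := le_trans h2 h3
    have hnabla : nablaF F = m := by
      apply IsLeast.csInf_eq
      constructor
      · exact ⟨U₀, hcover, hcd₀.symm⟩
      · rintro r ⟨U, hU, rfl⟩
        exact hlbD U hU
    exact ⟨hnabla ▸ hmem, fun r hr => hnabla ▸ hub r hr⟩
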